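/- Let W be a finite-dimensional complex representation of a finite group G = Θ ⋊ H with Θ finite abelian, and let B ⊆ Θ be an H-stable subgroup. Suppose that no irreducible constituent of W has trivial B-action, i.e., W^B = 0. If moreover every character χ of Θ that is nontrivial on B has trivial H-stabilizer, then dim W^H ≤ |H|^{-1} dim W. -/
import Mathlib


open Module

section Aux

/-- If a subgroup `S` of `Θ` has no nonzero invariants in `V`, then the sum of the
operators `ρ (inl s)` over `s ∈ S` vanishes. -/
lemma aux_sum_eq_zero {Θ H : Type} [CommGroup Θ] [Group H]
    (φ : H →* MulAut Θ)
    {V : Type} [AddCommGroup V] [Module ℂ V]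
    (ρ : Representation ℂ (Θ ⋊[φ] H) V) (S : Subgroup Θ) [Fintype S]
    (hS : Representation.invariants
        (ρ.comp (SemidirectProduct.inl.comp S.subtype) : Representation ℂ ↥S V) = ⊥) :
    (∑ s : S, ρ (SemidirectProduct.inl (s : Θ))) = 0 := by
  ext v
  have hinv : (∑ s : S, ρ (SemidirectProduct.inl (s : Θ))) v ∈
      Representation.invariants
        (ρ.comp (SemidirectProduct.inl.comp S.subtype) : Representation ℂ ↥S V) := by
    rw [Representation.mem_invariants]
    intro s₀
    have step : ∀ s : S,
        (ρ.comp (SemidirectProduct.inl.comp S.subtype)) s₀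
            ((ρ (SemidirectProduct.inl (s : Θ))) v)
          = (ρ (SemidirectProduct.inl (((s₀ * s : S) : Θ)))) v := by
      intro s
      show (ρ (SemidirectProduct.inl ((s₀ : Θ)))) ((ρ (SemidirectProduct.inl (s : Θ))) v) = _
      rw [← Module.End.mul_apply, ← map_mul ρ, ← map_mul SemidirectProduct.inl]
      rfl
    simp only [LinearMap.sum_apply, map_sum]
    rw [Finset.sum_congr rfl (fun s _ => step s)]
    exact Fintype.sum_equiv (Equiv.mulLeft s₀) _ _ (fun s => rfl)
  rw [hS] at hinv
  simpa using hinv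

end Aux

/-- Let `W` be a finite-dimensional complex representation of
`G = Θ ⋊ H` with `Θ` finite abelian, and `B ⊆ Θ` an `H`-stable subgroup.  Suppose
`W^B = 0` (no irreducible constituent of `W` has trivial `B`-action), and that every
character `χ : Θ → ℂˣ` which is nontrivial on `B` has trivial `H`-stabilizer.  Then
`dim W^H ≤ |H|⁻¹ dim W`. -/
theorem dim_H_invariants_le {Θ H : Type} [CommGroup Θ] [Fintype Θ] [Group H] [Fintype H]
    (φ : H →* MulAut Θ)
    {V : Type} [AddCommGroup V] [Module ℂ V] [FiniteDimensional ℂ V]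
    (ρ : Representation ℂ (Θ ⋊[φ] H) V)
    (B : Subgroup Θ) (hB : ∀ (h : H), ∀ b ∈ B, φ h b ∈ B)
    (hWB : Representation.invariants
        (ρ.comp (SemidirectProduct.inl.comp B.subtype) : Representation ℂ ↥B V) = ⊥)
    (hstab : ∀ χ : Θ →* ℂˣ, (∃ b : ↥B, χ ↑b ≠ 1) →
      ∀ h : H, (∀ θ : Θ, χ (φ h θ) = χ θ) → h = 1) :
    Fintype.card H *
        finrank ℂ (Representation.invariants
          (ρ.comp SemidirectProduct.inr : Representation ℂ H V)) ≤
      finrank ℂ V := by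
  classical
  -- key claim: for h ≠ 1, the trace of ρ (inr h) is 0
  have key : ∀ h : H, h ≠ 1 → LinearMap.trace ℂ V (ρ (SemidirectProduct.inr h)) = 0 := by
    intro h hne
    -- the homomorphism θ ↦ θ * (φ h θ)⁻¹
    set f : Θ →* Θ :=
      { toFun := fun θ => θ * (φ h θ)⁻¹
        map_one' := by simp
        map_mul' := by
          intro a b
          simp only [map_mul, mul_inv_rev]
          ac_rfl } with hf
    set S : Subgroup Θ := f.range with hS
    -- B ≤ S
    have hBS : B ≤ S := by
      intro b hb
      by_contra hbS
      have hb1 : (QuotientGroup.mk' S) b ≠ 1 := by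
        simpa [QuotientGroup.eq_one_iff] using hbS
      obtain ⟨χ', hχ'⟩ := CommGroup.exists_apply_ne_one_of_hasEnoughRootsOfUnity (Θ ⧸ S) ℂ hb1
      set χ : Θ →* ℂˣ := χ'.comp (QuotientGroup.mk' S) with hχ
      have hfix : ∀ θ : Θ, χ (φ h θ) = χ θ := by
        intro θ
        have hmem : θ * (φ h θ)⁻¹ ∈ S := ⟨θ, rfl⟩
        have h2 : ((θ * (φ h θ)⁻¹ : Θ) : Θ ⧸ S) = 1 := (QuotientGroup.eq_one_iff _).2 hmem
        have h1 : χ (θ * (φ h θ)⁻¹) = 1 := by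
          simp only [hχ, MonoidHom.comp_apply, QuotientGroup.mk'_apply]
          rw [h2, map_one]
        rw [map_mul, map_inv] at h1
        exact (mul_inv_eq_one.mp h1).symm
      exact hne (hstab χ ⟨⟨b, hb⟩, hχ'⟩ h hfix)
    -- the S-invariants vanish since B ≤ S
    have hWS : Representation.invariants
        (ρ.comp (SemidirectProduct.inl.comp S.subtype) : Representation ℂ ↥S V) = ⊥ := by
      rw [eq_bot_iff, ← hWB]
      intro v hv
      rw [Representation.mem_invariants] at hv ⊢
      intro b
      exact hv ⟨(b : Θ), hBS b.2⟩
    have hZ : (∑ s : S, ρ (SemidirectProduct.inl (s : Θ))) = 0 :=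
      aux_sum_eq_zero φ ρ S hWS
    -- each `ρ (inl s) * ρ (inr h)` for `s ∈ S` has the same trace as `ρ (inr h)`
    have hconj : ∀ s : S,
        LinearMap.trace ℂ V (ρ (SemidirectProduct.inl (s : Θ)) * ρ (SemidirectProduct.inr h))
          = LinearMap.trace ℂ V (ρ (SemidirectProduct.inr h)) := by
      rintro ⟨s, θ, rfl⟩
      have hgrp : (SemidirectProduct.inl (f θ) * SemidirectProduct.inr h : Θ ⋊[φ] H)
          = SemidirectProduct.inl θ *
            (SemidirectProduct.inr h * SemidirectProduct.inl θ⁻¹) := by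
        ext <;> simp [hf]
      calc LinearMap.trace ℂ V (ρ (SemidirectProduct.inl (f θ)) * ρ (SemidirectProduct.inr h))
          = LinearMap.trace ℂ V (ρ (SemidirectProduct.inl (f θ) * SemidirectProduct.inr h)) := by
            rw [map_mul ρ]
        _ = LinearMap.trace ℂ V (ρ (SemidirectProduct.inl θ) *
              ρ (SemidirectProduct.inr h * SemidirectProduct.inl θ⁻¹)) := by
            rw [hgrp, map_mul ρ]
        _ = LinearMap.trace ℂ V (ρ (SemidirectProduct.inr h * SemidirectProduct.inl θ⁻¹) *
              ρ (SemidirectProduct.inl θ)) := LinearMap.trace_mul_comm ℂ _ _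
        _ = LinearMap.trace ℂ V (ρ (SemidirectProduct.inr h)) := by
            rw [← map_mul ρ]
            congr 2
            rw [mul_assoc, ← map_mul SemidirectProduct.inl, inv_mul_cancel, map_one, mul_one]
    -- summing over S gives |S| * trace = 0
    have hsum : (Fintype.card S : ℂ) * LinearMap.trace ℂ V (ρ (SemidirectProduct.inr h)) = 0 := by
      have h0 : (∑ s : S, ρ (SemidirectProduct.inl (s : Θ))) * ρ (SemidirectProduct.inr h)
          = 0 := by rw [hZ, zero_mul]
      have htr := congrArg (LinearMap.trace ℂ V) h0
      rw [Finset.sum_mul, map_sum, map_zero] at htr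
      rw [Finset.sum_congr rfl (fun s _ => hconj s)] at htr
      simpa [Finset.sum_const, nsmul_eq_mul] using htr
    have hScard : (Fintype.card S : ℂ) ≠ 0 := Nat.cast_ne_zero.mpr Fintype.card_ne_zero
    exact (mul_eq_zero.mp hsum).resolve_left hScard
  -- now use the averaging projector for H
  haveI : Invertible (Fintype.card H : ℂ) :=
    invertibleOfNonzero (Nat.cast_ne_zero.mpr Fintype.card_ne_zero)
  set ρH : Representation ℂ H V := ρ.comp SemidirectProduct.inr with hρH
  have hproj := ρH.isProj_averageMap
  have htrP : LinearMap.trace ℂ V ρH.averageMap = (finrank ℂ ρH.invariants : ℂ) :=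
    hproj.trace
  have havg : ρH.averageMap = ⅟ (Fintype.card H : ℂ) • ∑ g : H, ρH g := by
    rw [Representation.averageMap, GroupAlgebra.average, map_smul, map_sum]
    congr 1
    exact Finset.sum_congr rfl fun g _ => ρH.asAlgebraHom_of g
  have hsumtr : (∑ g : H, LinearMap.trace ℂ V (ρH g)) = (finrank ℂ V : ℂ) := by
    rw [Finset.sum_eq_single 1 (fun g _ hg => by simpa [hρH] using key g hg) (by simp)]
    simp [hρH, map_one, LinearMap.trace_one]
  have hmain : (Fintype.card H : ℂ) * (finrank ℂ ρH.invariants : ℂ) = (finrank ℂ V : ℂ) := by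
    rw [← htrP, havg, map_smul, map_sum, hsumtr, smul_eq_mul, ← mul_assoc,
      mul_invOf_self, one_mul]
  have hnat : Fintype.card H * finrank ℂ ρH.invariants = finrank ℂ V := by
    exact_mod_cast hmain
  exact le_of_eq hnat
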